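/- Let S be a regular category (complete, or with X finite), C a simplicial complex on X, A an S-valued separated presheaf on C with A ↪ F for a sheaf F extended to all of P(X) by F(U) = ∏_{x∈U}F({x}). Define ⋈A = ⋀_{U∈C} (F_{U⊆X})⁻¹(A_U) as a subobject of F(X). Then ⋈A, together with the arrows ρ_U : ⋈A → A_U obtained by restricting F_{U⊆X}, is a limit of the diagram A : C^op → S. -/

import Mathlib

open CategoryTheory CategoryTheory.Limits Opposite
open scoped Classical

lemma aux_pb_mk {S : Type*} [Category S] [HasPullbacks S] {Y Z A : S} (f : Y ⟶ Z) (q : A ⟶ Z) [Mono q] :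
    (Subobject.pullback f).obj (Subobject.mk q) = Subobject.mk (pullback.snd q f) :=
  Quotient.sound ⟨MonoOver.isoMk (Iso.refl _) (by simp)⟩

lemma aux_le_pullback {S : Type*} [Category S] [HasPullbacks S] {Y Z : S} (f : Y ⟶ Z)
    (Q : Subobject Z) (T : Subobject Y) (h : Q.Factors (T.arrow ≫ f)) :
    T ≤ (Subobject.pullback f).obj Q := by
  induction Q using Subobject.ind with
  | _ q =>
    rw [aux_pb_mk]
    let g := Subobject.factorThru _ _ h ≫ (Subobject.underlyingIso q).hom
    have hg : g ≫ q = T.arrow ≫ f := by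
      simp [g]
    exact Subobject.le_mk_of_comm (pullback.lift g T.arrow hg) (pullback.lift_snd _ _ _)

lemma aux_factors_of_le_pullback {S : Type*} [Category S] [HasPullbacks S] {Y Z : S} (f : Y ⟶ Z)
    (Q : Subobject Z) (T : Subobject Y) (h : T ≤ (Subobject.pullback f).obj Q) :
    Q.Factors (T.arrow ≫ f) := by
  induction Q using Subobject.ind with
  | _ q =>
    rw [aux_pb_mk] at h
    have hj : Subobject.ofLE _ _ h ≫ (Subobject.mk (pullback.snd q f)).arrow = T.arrow :=
      Subobject.ofLE_arrow h
    rw [Subobject.mk_factors_iff]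
    refine ⟨Subobject.ofLE _ _ h ≫ (Subobject.underlyingIso _).hom ≫ pullback.fst q f, ?_⟩
    rw [← hj]
    simp [pullback.condition]

/-- An abstract simplicial complex on a vertex set `X`. -/
structure SC (X : Type) where
  faces : Set (Finset X)
  down_closed : ∀ {s t : Finset X}, s ∈ faces → t ⊆ s → t ∈ faces
  singleton_mem : ∀ x : X, {x} ∈ faces

/-- The poset of faces of a simplicial complex, ordered by inclusion. -/
def Face {X : Type} (C : SC X) : Type := {U : Finset X // U ∈ C.faces}

instance {X : Type} (C : SC X) : PartialOrder (Face C) :=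
  Subtype.partialOrder _

/-- The singleton face on a vertex. -/
def sFace {X : Type} (C : SC X) (x : X) : Face C := ⟨{x}, C.singleton_mem x⟩

variable {S : Type*} [Category S]

/-- An `S`-valued presheaf on the simplicial complex `C`. -/
abbrev Psh {X : Type} (C : SC X) (S : Type*) [Category S] : Type _ :=
  (Face C)ᵒᵖ ⥤ S

/-- The restriction arrow `P(V) ⟶ P(U)` for faces `U ⊆ V`. -/
def resA {X : Type} {C : SC X} (P : Psh C S) {U V : Face C} (h : U ≤ V) :
    P.obj (op V) ⟶ P.obj (op U) :=
  P.map (homOfLE h).op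

/-- The canonical arrow `P(U) ⟶ ∏_{x∈U} P({x})`. -/
noncomputable def canMap {X : Type} {C : SC X} [HasFiniteLimits S]
    (P : Psh C S) (U : Face C) :
    P.obj (op U) ⟶ ∏ᶜ (fun x : {x // x ∈ U.1} => P.obj (op (sFace C x.1))) :=
  Pi.lift fun x => resA P (show sFace C x.1 ≤ U from Finset.singleton_subset_iff.mpr x.2)

/-- The arrow `P(U) ⟶ ∏ᵢ P(Uᵢ)` for a cover `⋃ᵢ Uᵢ = U`. -/
noncomputable def coverMap {X : Type} {C : SC X} [HasFiniteLimits S]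
    (P : Psh C S) {ι : Type} [Fintype ι] (Ui : ι → Face C) (U : Face C)
    (hcov : ∀ i, Ui i ≤ U) :
    P.obj (op U) ⟶ ∏ᶜ (fun i => P.obj (op (Ui i))) :=
  Pi.lift fun i => resA P (hcov i)

/-- The intersection of two faces, as a face. -/
noncomputable def interFace {X : Type} (C : SC X) (U V : Face C) : Face C :=
  ⟨U.1 ∩ V.1, C.down_closed U.2 (by classical exact Finset.inter_subset_left)⟩

/-- The first comparison arrow `∏ᵢ P(Uᵢ) ⟶ ∏_{j,k} P(Uⱼ ∩ U_k)`. -/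
noncomputable def cmpL {X : Type} {C : SC X} [HasFiniteLimits S]
    (P : Psh C S) {ι : Type} [Fintype ι] (Ui : ι → Face C) :
    (∏ᶜ (fun i => P.obj (op (Ui i)))) ⟶
      ∏ᶜ (fun jk : ι × ι => P.obj (op (interFace C (Ui jk.1) (Ui jk.2)))) :=
  Pi.lift fun jk => Pi.π _ jk.1 ≫
    resA P (show interFace C (Ui jk.1) (Ui jk.2) ≤ Ui jk.1 from by
      classical exact Finset.inter_subset_left)

/-- The second comparison arrow `∏ᵢ P(Uᵢ) ⟶ ∏_{j,k} P(Uⱼ ∩ U_k)`. -/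
noncomputable def cmpR {X : Type} {C : SC X} [HasFiniteLimits S]
    (P : Psh C S) {ι : Type} [Fintype ι] (Ui : ι → Face C) :
    (∏ᶜ (fun i => P.obj (op (Ui i)))) ⟶
      ∏ᶜ (fun jk : ι × ι => P.obj (op (interFace C (Ui jk.1) (Ui jk.2)))) :=
  Pi.lift fun jk => Pi.π _ jk.2 ≫
    resA P (show interFace C (Ui jk.1) (Ui jk.2) ≤ Ui jk.2 from by
      classical exact Finset.inter_subset_right)

/-- The sheaf condition for an `S`-valued presheaf on a simplicial complex:
for every (finite) cover `⋃ᵢ Uᵢ = U`, the arrow `P(U) ⟶ ∏ᵢ P(Uᵢ)` is the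
equalizer of the two comparison arrows into `∏_{j,k} P(Uⱼ ∩ U_k)`. -/
def IsSheafS {X : Type} {C : SC X} [HasFiniteLimits S] (P : Psh C S) : Prop :=
  ∀ (ι : Type) (_ : Fintype ι) (Ui : ι → Face C) (U : Face C)
    (hcov : ∀ i, Ui i ≤ U), (∀ x, x ∈ U.1 → ∃ i, x ∈ (Ui i).1) →
    (∀ (W : S) (k : W ⟶ ∏ᶜ (fun i => P.obj (op (Ui i)))),
      k ≫ cmpL P Ui = k ≫ cmpR P Ui →
      ∃! l : W ⟶ P.obj (op U), l ≫ coverMap P Ui U hcov = k)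

/-- The separatedness condition: for every (finite) cover `⋃ᵢ Uᵢ = U`, the
arrow `P(U) ⟶ ∏ᵢ P(Uᵢ)` is a monomorphism. -/
def IsSeparatedS {X : Type} {C : SC X} [HasFiniteLimits S] (P : Psh C S) : Prop :=
  ∀ (ι : Type) (_ : Fintype ι) (Ui : ι → Face C) (U : Face C)
    (hcov : ∀ i, Ui i ≤ U), (∀ x, x ∈ U.1 → ∃ i, x ∈ (Ui i).1) →
    Mono (coverMap P Ui U hcov)

/-- A regular category: finite limits, regular-epi/mono image factorizations,
and regular epimorphisms stable under pullback. -/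
class RegCat (S : Type*) [Category S] [HasFiniteLimits S] [HasImages S] :
    Prop where
  regEpi_factorThruImage : ∀ {A B : S} (f : A ⟶ B),
    Nonempty (RegularEpi (factorThruImage f))
  regEpi_pullback_stable : ∀ {A B D : S} (f : A ⟶ B) (g : D ⟶ B),
    Nonempty (RegularEpi f) → Nonempty (RegularEpi (pullback.snd f g))

/-- The object `F(X) = ∏_{x∈X} F({x})`, extending the sheaf `F` to the full
vertex set. -/
noncomputable def FXobj {X : Type} [Fintype X] {C : SC X} {S : Type*}
    [Category S] [HasFiniteLimits S] (F : Psh C S) : S :=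
  ∏ᶜ fun x : X => F.obj (op (sFace C x))

/-- The projection `F(X) ⟶ F(U)` for a face `U`, using the sheaf property of
`F` (in its pointwise form `F(U) ≅ ∏_{x∈U} F({x})`). -/
noncomputable def projX {X : Type} [Fintype X] {C : SC X} {S : Type*}
    [Category S] [HasFiniteLimits S] (F : Psh C S)
    (hF : ∀ U : Face C, IsIso (canMap F U)) (U : Face C) :
    FXobj F ⟶ F.obj (op U) :=
  (Pi.lift fun x : {x // x ∈ U.1} =>
      Pi.π (fun x : X => F.obj (op (sFace C x))) x.1) ≫
    (haveI := hF U; inv (canMap F U))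

/-- Let `F` be a sheaf on a simplicial complex `C` on a
finite `X`, valued in a regular category, `A ↪ F` a separated subpresheaf,
and `⋈A = ⋀_{U∈C} F_{U⊆X}⁻¹(A_U) ≤ F(X)` the natural join. Then `⋈A`,
together with the arrows `ρ_U : ⋈A ⟶ A_U` obtained by restricting the
projections `F_{U⊆X}`, is a limit of the diagram `A : C^op → S`: it is
terminal among cones over `A`. -/
theorem stmt12 {X : Type} [Fintype X] {C : SC X} {S : Type*} [Category S]
    [HasFiniteLimits S] [HasImages S] [RegCat S]
    (F : Psh C S) (hF : ∀ U : Face C, IsIso (canMap F U))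
    (A : ∀ U : Face C, Subobject (F.obj (op U)))
    (hA : ∀ (U V : Face C) (h : U ≤ V),
      A V ≤ (Subobject.pullback (resA F h)).obj (A U))
    -- `N` is the meet `⋀_{U∈C} (F_{U⊆X})⁻¹(A_U)` in `Sub(F(X))`:
    (N : Subobject (FXobj F))
    (hN : ∀ T : Subobject (FXobj F),
      (∀ U : Face C, T ≤ (Subobject.pullback (projX F hF U)).obj (A U)) ↔
        T ≤ N)
    -- `ρ_U : ⋈A ⟶ A_U` is obtained by restricting the projection `F_{U⊆X}`:
    (ρ : ∀ U : Face C, ((N : S) ⟶ (A U : S)))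
    (hρ : ∀ U : Face C, ρ U ≫ (A U).arrow = N.arrow ≫ projX F hF U) :
    -- `(N, ρ)` is terminal among cones over the diagram `A`:
    ∀ (W : S) (w : ∀ U : Face C, W ⟶ (A U : S)),
      (∀ (U V : Face C) (h : U ≤ V) (g : ((A V : S) ⟶ (A U : S))),
        g ≫ (A U).arrow = (A V).arrow ≫ resA F h → w V ≫ g = w U) →
      ∃! m : W ⟶ (N : S), ∀ U : Face C, m ≫ ρ U = w U := by
  intro W w hw
  classical
  -- restriction maps inside A
  have hfac : ∀ (U : Face C) (x : {x // x ∈ U.1}),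
      (A (sFace C x.1)).Factors ((A U).arrow ≫
        resA F (show sFace C x.1 ≤ U from Finset.singleton_subset_iff.mpr x.2)) := by
    intro U x
    exact aux_factors_of_le_pullback _ _ _
      (hA (sFace C x.1) U (Finset.singleton_subset_iff.mpr x.2))
  have hwg : ∀ (U : Face C) (x : {x // x ∈ U.1}),
      w U ≫ (A U).arrow ≫ resA F (show sFace C x.1 ≤ U from
        Finset.singleton_subset_iff.mpr x.2) = w (sFace C x.1) ≫ (A (sFace C x.1)).arrow := by
    intro U x
    have h1 := Subobject.factorThru_arrow _ _ (hfac U x)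
    have h2 := hw (sFace C x.1) U (Finset.singleton_subset_iff.mpr x.2)
      (Subobject.factorThru _ _ (hfac U x)) h1
    rw [← h2, Category.assoc, h1]
  -- the comparison arrow into F(X)
  set k : W ⟶ FXobj F :=
    Pi.lift (fun x : X => w (sFace C x) ≫ (A (sFace C x)).arrow) with hkdef
  have hk : ∀ U : Face C, k ≫ projX F hF U = w U ≫ (A U).arrow := by
    intro U
    haveI := hF U
    rw [projX, ← Category.assoc, IsIso.comp_inv_eq]
    apply Pi.hom_ext
    intro x
    simp only [Category.assoc, limit.lift_π, Fan.mk_pt, Fan.mk_π_app, canMap, hkdef]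
    simp only [FXobj, Category.assoc, limit.lift_π, Fan.mk_pt, Fan.mk_π_app]
    exact (hwg U x).symm
  -- projX at singletons is the product projection
  have hproj : ∀ x : X,
      projX F hF (sFace C x) = Pi.π (fun x : X => F.obj (op (sFace C x))) x := by
    intro x
    haveI := hF (sFace C x)
    rw [projX]
    apply (IsIso.comp_inv_eq _).mpr
    apply Pi.hom_ext
    rintro ⟨y, hy⟩
    have hyx : y = x := Finset.mem_singleton.mp hy
    subst hyx
    simp only [canMap, Category.assoc, limit.lift_π, Fan.mk_pt, Fan.mk_π_app]
    simp only [FXobj, Category.assoc, limit.lift_π, Fan.mk_pt, Fan.mk_π_app]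
    rw [show resA F (show sFace C y ≤ sFace C y from
        Finset.singleton_subset_iff.mpr hy) = 𝟙 _ from by
      simp [resA, show (homOfLE (show sFace C y ≤ sFace C y from
        Finset.singleton_subset_iff.mpr hy)) = 𝟙 (sFace C y) from rfl]]
    simp
  -- factor k through its image, then through N
  haveI : RegularEpi (factorThruImage k) := (RegCat.regEpi_factorThruImage k).some
  haveI : StrongEpi (factorThruImage k) := by
    have := isRegularEpi_of_regularEpi (RegCat.regEpi_factorThruImage k).some
    infer_instance
  have hlift : ∀ U : Face C, ∃ l : image k ⟶ (A U : S),
      factorThruImage k ≫ l = w U ∧ l ≫ (A U).arrow = image.ι k ≫ projX F hF U := by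
    intro U
    have sq : CommSq (w U) (factorThruImage k) (A U).arrow (image.ι k ≫ projX F hF U) := by
      constructor
      rw [← Category.assoc, image.fac, hk U]
    exact ⟨sq.lift, sq.fac_left, sq.fac_right⟩
  have hTN : Subobject.mk (image.ι k) ≤ N := by
    rw [← hN]
    intro U
    obtain ⟨l, -, hl⟩ := hlift U
    apply aux_le_pullback
    have heq : (Subobject.mk (image.ι k)).arrow ≫ projX F hF U =
        ((Subobject.underlyingIso (image.ι k)).hom ≫ l) ≫ (A U).arrow := by
      rw [Category.assoc, hl, ← Subobject.underlyingIso_hom_comp_eq_mk (image.ι k)]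
      simp
    rw [heq]
    exact Subobject.factors_comp_arrow _
  set m : W ⟶ (N : S) := factorThruImage k ≫
    (Subobject.underlyingIso (image.ι k)).inv ≫ Subobject.ofLE _ _ hTN with hmdef
  have hmN : m ≫ N.arrow = k := by
    simp [hmdef, Subobject.ofLE_arrow]
  have hkx : ∀ x : X, k ≫ Pi.π (fun x : X => F.obj (op (sFace C x))) x =
      w (sFace C x) ≫ (A (sFace C x)).arrow := by
    intro x; simp [hkdef, FXobj]
  refine ⟨m, ?_, ?_⟩
  · intro U
    have : (m ≫ ρ U) ≫ (A U).arrow = w U ≫ (A U).arrow := by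
      rw [Category.assoc, hρ U, ← Category.assoc, hmN, hk U]
    exact (cancel_mono (A U).arrow).mp this
  · intro m' hm'
    have hm'N : m' ≫ N.arrow = k := by
      apply Pi.hom_ext
      intro x
      erw [hkx x, ← hproj x, Category.assoc, ← hρ (sFace C x), ← Category.assoc, hm' (sFace C x)]
    have : m' ≫ N.arrow = m ≫ N.arrow := by rw [hm'N, hmN]
    exact (cancel_mono N.arrow).mp this
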